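/- arXiv:math/0305137 — 7 statements merged into one kernel-verified Lean document; each statement's English description precedes it below -/
import Mathlib

section
/- Let R be a commutative Noetherian ring of prime characteristic p, and let a be an ideal of R. Then the sequence of tight closures of the Frobenius powers, ((a^{[p^n]})^*)_{n∈ℕ}, is an f-sequence: f^{-1}((a^{[p^{n+1}]})^*) = (a^{[p^n]})^* for all n. -/
def FrobPow {R : Type*} [CommRing R] (p n : ℕ) (b : Ideal R) : Ideal R :=
  Ideal.span ((fun x => x ^ p ^ n) '' (b : Set R))

def RingCirc (R : Type*) [CommRing R] : Set R := {c | ∀ P ∈ minimalPrimes R, c ∉ P}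

def TightClosure {R : Type*} [CommRing R] (p : ℕ) (b : Ideal R) : Set R :=
  {r | ∃ c ∈ RingCirc R, ∃ N : ℕ, ∀ n ≥ N, c * r ^ p ^ n ∈ FrobPow p n b}

section aux
variable {R : Type*} [CommRing R] (p : ℕ) [hp : Fact (p.Prime)] [CharP R p]

lemma frobPow_eq_map (n : ℕ) (b : Ideal R) :
    FrobPow p n b = Ideal.map (iterateFrobenius R p n) b := rfl

lemma frobPow_frobPow (m k : ℕ) (b : Ideal R) :
    FrobPow p m (FrobPow p k b) = FrobPow p (m + k) b := by
  rw [frobPow_eq_map, frobPow_eq_map, frobPow_eq_map, Ideal.map_map, ← iterateFrobenius_add]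

end aux

theorem tightClosure_frobeniusPowers_fSequence {R : Type*} [CommRing R] [IsNoetherianRing R]
    (p : ℕ) (hp : p.Prime) [CharP R p] (a : Ideal R) :
    ∀ (n : ℕ) (r : R),
      r ∈ TightClosure p (FrobPow p n a) ↔ r ^ p ∈ TightClosure p (FrobPow p (n + 1) a) := by
  haveI : Fact p.Prime := ⟨hp⟩
  intro n r
  have key : ∀ m : ℕ, (r ^ p) ^ p ^ m = r ^ p ^ (m + 1) := fun m => by
    rw [← pow_mul, pow_succ, mul_comm]
  constructor
  · rintro ⟨c, hc, N, hN⟩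
    refine ⟨c, hc, N, fun m hm => ?_⟩
    rw [key, frobPow_frobPow]
    have := hN (m + 1) (le_trans hm (Nat.le_succ m))
    rw [frobPow_frobPow] at this
    rwa [show m + (n + 1) = m + 1 + n from by omega]
  · rintro ⟨c, hc, N, hN⟩
    refine ⟨c, hc, N + 1, fun m hm => ?_⟩
    have := hN (m - 1) (by omega)
    rw [key, frobPow_frobPow, show m - 1 + 1 = m from by omega,
      show m - 1 + (n + 1) = m + n from by omega] at this
    rwa [frobPow_frobPow]
end

section
/- Let R be a commutative Noetherian ring of prime characteristic p and let (a_n) be an f-sequence of ideals of R. Then for every n, the set of associated primes of a_n is contained in the set of associated primes of a_{n+1}. -/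
open IsLocalRing in
/-- If a prime `P` is the radical of `J` (so `P` is the unique minimal prime over `J`),
then `P` is an associated prime of `R ⧸ J`. -/
lemma isAssociatedPrime_of_radical_eq {R : Type*} [CommRing R] [IsNoetherianRing R]
    {J P : Ideal R} (hP : P.IsPrime) (hrad : J.radical = P) :
    P ∈ associatedPrimes R (R ⧸ J) := by
  classical
  let Rp := Localization.AtPrime P
  let f : R →+* Rp := algebraMap R Rp
  haveI : IsNoetherianRing Rp := IsLocalization.isNoetherianRing P.primeCompl Rp ‹_›
  set J' : Ideal Rp := J.map f with hJ'def
  have hJle : J ≤ P := hrad ▸ Ideal.le_radical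
  have hmax : P.map f = maximalIdeal Rp := Localization.AtPrime.map_eq_maximalIdeal
  have hJ'le : J' ≤ maximalIdeal Rp := hmax ▸ Ideal.map_mono hJle
  have hJ'top : J' ≠ ⊤ := fun h => (maximalIdeal.isMaximal Rp).ne_top (top_le_iff.mp (h ▸ hJ'le))
  haveI : Nontrivial (Rp ⧸ J') := Ideal.Quotient.nontrivial_iff.mpr hJ'top
  obtain ⟨Q', hQ'⟩ := associatedPrimes.nonempty Rp (Rp ⧸ J')
  obtain ⟨hQp, x, hx⟩ := isAssociatedPrime_iff.mp hQ'
  obtain ⟨x', rfl⟩ := Ideal.Quotient.mkₐ_surjective Rp _ x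
  have hmemQ : ∀ w : Rp, w ∈ Q' ↔ w * x' ∈ J' := by
    intro w
    rw [hx, Submodule.mem_colon_singleton, Submodule.mem_bot, ← map_smul, smul_eq_mul,
      Ideal.Quotient.mkₐ_eq_mk, ← Ideal.Quotient.mk_eq_mk, Submodule.Quotient.mk_eq_zero]
  -- Q' is the maximal ideal
  obtain ⟨n, hn⟩ := Ideal.exists_radical_pow_le_of_fg J (by rw [hrad]; exact IsNoetherian.noetherian P)
  rw [hrad] at hn
  have hQeq : Q' = P.map f := by
    refine le_antisymm (hmax ▸ le_maximalIdeal hQp.ne_top) ?_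
    intro y hy
    refine hQp.mem_of_pow_mem n ?_
    have h1 : y ^ n ∈ (P.map f) ^ n := Ideal.pow_mem_pow hy n
    have h2 : (P.map f) ^ n ≤ J' := by
      rw [← Ideal.map_pow]
      exact Ideal.map_mono hn
    have h3 : J' ≤ Q' := fun j hj => (hmemQ j).mpr (Ideal.mul_mem_right x' J' hj)
    exact h3 (h2 h1)
  obtain ⟨⟨r, s⟩, hrs⟩ := IsLocalization.mk'_surjective P.primeCompl x'
  have hspec : x' * f s = f r := by rw [← hrs]; exact IsLocalization.mk'_spec Rp r s
  have hfr : ∀ w : Rp, w * f r ∈ J' ↔ w ∈ Q' := by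
    intro w
    constructor
    · intro hw
      have heq : w * f s * x' = w * f r := by
        rw [mul_assoc, mul_comm ((f : R →+* Rp) s) x', hspec]
      have : w * f s ∈ Q' := (hmemQ _).mpr (heq ▸ hw)
      obtain ⟨u, hu⟩ := IsLocalization.map_units Rp s
      have hw2 : w = w * f s * ↑u⁻¹ := by
        rw [← hu, mul_assoc, Units.mul_inv, mul_one]
      rw [hw2]
      exact Ideal.mul_mem_right _ _ this
    · intro hw
      have := Ideal.mul_mem_right (f s) J' ((hmemQ w).mp hw)
      rwa [mul_assoc, hspec] at this
  -- get generators and clear denominators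
  obtain ⟨T, hT⟩ := IsNoetherian.noetherian P
  have hgen : ∀ t : R, ∃ c : P.primeCompl, t ∈ T → (c : R) * (t * r) ∈ J := by
    intro t
    by_cases ht : t ∈ T
    · have htP : t ∈ P := hT ▸ Ideal.subset_span ht
      have h1 : f t ∈ Q' := hQeq ▸ Ideal.mem_map_of_mem f htP
      have h2 : f t * f r ∈ J' := (hfr _).mpr h1
      rw [← map_mul] at h2
      obtain ⟨⟨j, m⟩, hjm⟩ := (IsLocalization.mem_map_algebraMap_iff P.primeCompl Rp).mp h2
      rw [← map_mul] at hjm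
      obtain ⟨c, hc⟩ := (IsLocalization.eq_iff_exists P.primeCompl Rp).mp hjm
      refine ⟨c * m, fun _ => ?_⟩
      have : (c : R) * (t * r * (m : R)) = (c : R) * (j : R) := hc
      have h3 : ((c * m : P.primeCompl) : R) * (t * r) = (c : R) * (j : R) := by
        push_cast
        ring_nf
        rw [← this]; ring
      rw [h3]
      exact Ideal.mul_mem_left J _ j.2
    · exact ⟨1, fun h => absurd h ht⟩
  choose g hg using hgen
  set s₀ : R := ∏ t ∈ T, (g t : R) with hs₀def
  have hs₀ : s₀ ∈ P.primeCompl := Submonoid.prod_mem _ (fun t _ => (g t).2)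
  -- P = (J : s₀ * r)
  have hPle : ∀ z ∈ P, z * (s₀ * r) ∈ J := by
    have : P ≤ J.colon (Ideal.span {s₀ * r}) := by
      rw [← hT, Submodule.span_le]
      intro t ht
      rw [SetLike.mem_coe, Ideal.mem_colon_span_singleton]
      have h1 : (g t : R) * (t * r) ∈ J := hg t ht
      have h2 : t * (s₀ * r) = (∏ t' ∈ T.erase t, (g t' : R)) * ((g t : R) * (t * r)) := by
        rw [hs₀def, ← Finset.mul_prod_erase T _ ht]
        ring
      rw [h2]
      exact Ideal.mul_mem_left J _ h1
    intro z hz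
    have := this hz
    rwa [Ideal.mem_colon_span_singleton] at this
  have hPge : ∀ z : R, z * (s₀ * r) ∈ J → z ∈ P := by
    intro z hz
    have h0 : z * s₀ * r ∈ J := by rwa [mul_assoc]
    have h1 : f (z * s₀) * f r ∈ J' := by
      have := Ideal.mem_map_of_mem f h0
      rwa [map_mul] at this
    have h2 : f (z * s₀) ∈ Q' := (hfr _).mp h1
    rw [hQeq, hmax] at h2
    have h3 : z * s₀ ∈ P := by
      have := Ideal.mem_comap.mpr h2
      change z * s₀ ∈ (maximalIdeal Rp).under R at this
      rwa [Localization.AtPrime.under_maximalIdeal] at this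
    rcases hP.mem_or_mem h3 with h | h
    · exact h
    · exact absurd h hs₀
  refine isAssociatedPrime_iff.mpr ⟨hP, Ideal.Quotient.mk J (s₀ * r), ?_⟩
  ext z
  rw [Submodule.mem_colon_singleton, Submodule.mem_bot, ← Ideal.Quotient.mk_eq_mk,
    ← Submodule.Quotient.mk_smul, Submodule.Quotient.mk_eq_zero, smul_eq_mul]
  exact ⟨fun h => hPle z h, fun h => hPge z h⟩

theorem fSequence_associatedPrimes_mono {R : Type*} [CommRing R] [IsNoetherianRing R]
    (p : ℕ) (hp : p.Prime) [CharP R p] (a : ℕ → Ideal R)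
    (hf : ∀ (n : ℕ) (r : R), r ∈ a n ↔ r ^ p ∈ a (n + 1)) :
    ∀ n : ℕ, associatedPrimes R (R ⧸ a n) ⊆ associatedPrimes R (R ⧸ a (n + 1)) := by
  intro n P hP
  obtain ⟨hPp, x, hx⟩ := isAssociatedPrime_iff.mp hP
  obtain ⟨r, rfl⟩ := Ideal.Quotient.mkₐ_surjective R _ x
  have hmem : ∀ z : R, z ∈ P ↔ z * r ∈ a n := by
    intro z
    rw [hx, Submodule.mem_colon_singleton, Submodule.mem_bot, ← map_smul, smul_eq_mul,
      Ideal.Quotient.mkₐ_eq_mk, ← Ideal.Quotient.mk_eq_mk, Submodule.Quotient.mk_eq_zero]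
  set b : Ideal R := (a (n+1)).colon (Ideal.span {r ^ p}) with hbdef
  have hbmem : ∀ z : R, z ∈ b ↔ z * r ^ p ∈ a (n+1) := fun z => Ideal.mem_colon_span_singleton
  have hzp : ∀ z : R, z ^ (p - 1) * z = z ^ p := by
    intro z
    have h : p - 1 + 1 = p := Nat.succ_pred_eq_of_pos hp.pos
    conv_rhs => rw [← h, pow_succ]
  have hrad : b.radical = P := by
    apply le_antisymm
    · rw [hPp.radical_le_iff]
      intro z hz
      rw [hbmem] at hz
      have h1 : z ^ p * r ^ p ∈ a (n+1) := by
        have h2 : z ^ p * r ^ p = z ^ (p - 1) * (z * r ^ p) := by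
          rw [← hzp z]; ring
        rw [h2]
        exact Ideal.mul_mem_left _ _ hz
      rw [hmem, hf n (z * r), mul_pow]
      exact h1
    · intro z hz
      rw [hmem] at hz
      have h1 : (z * r) ^ p ∈ a (n+1) := (hf n _).mp hz
      rw [mul_pow] at h1
      exact ⟨p, (hbmem _).mpr h1⟩
  have hPb : P ∈ associatedPrimes R (R ⧸ b) := isAssociatedPrime_of_radical_eq hPp hrad
  obtain ⟨-, y, hy⟩ := isAssociatedPrime_iff.mp hPb
  obtain ⟨s, rfl⟩ := Ideal.Quotient.mkₐ_surjective R _ y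
  have hmem2 : ∀ z : R, z ∈ P ↔ z * s ∈ b := by
    intro z
    rw [hy, Submodule.mem_colon_singleton, Submodule.mem_bot, ← map_smul, smul_eq_mul,
      Ideal.Quotient.mkₐ_eq_mk, ← Ideal.Quotient.mk_eq_mk, Submodule.Quotient.mk_eq_zero]
  refine isAssociatedPrime_iff.mpr ⟨hPp, Ideal.Quotient.mk (a (n+1)) (s * r ^ p), ?_⟩
  ext z
  rw [Submodule.mem_colon_singleton, Submodule.mem_bot, ← Ideal.Quotient.mk_eq_mk,
    ← Submodule.Quotient.mk_smul, Submodule.Quotient.mk_eq_zero, smul_eq_mul]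
  rw [hmem2, hbmem, mul_assoc]
end

section
/- Let R be a commutative ring of prime characteristic p, let a be an F-closed ideal of R, and let S be a multiplicatively closed subset of R. Then the extension a·S^{-1}R is an F-closed ideal of the localization S^{-1}R. -/
lemma FrobPow_map_le {R A : Type*} [CommRing R] [CommRing A] (p n : ℕ) (hp : p.Prime)
    [CharP A p] (f : R →+* A) (b : Ideal R) :
    FrobPow p n (Ideal.map f b) ≤ Ideal.map f (FrobPow p n b) := by
  haveI : Fact p.Prime := ⟨hp⟩
  rw [FrobPow, Ideal.span_le]
  rintro _ ⟨x, hx, rfl⟩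
  simp only
  have hx' : x ∈ Ideal.span (f '' (b : Set R)) := hx
  clear hx
  induction hx' using Submodule.span_induction with
  | mem z hz =>
    obtain ⟨w, hw, rfl⟩ := hz
    rw [← map_pow]
    exact Ideal.mem_map_of_mem f (Ideal.subset_span ⟨w, hw, rfl⟩)
  | zero =>
    rw [zero_pow (pow_ne_zero n hp.ne_zero)]
    exact zero_mem _
  | add u v _ _ hu hv =>
    rw [add_pow_char_pow]
    exact add_mem hu hv
  | smul c u _ hu =>
    rw [smul_eq_mul, mul_pow]
    exact Ideal.mul_mem_left _ _ hu

theorem fClosed_localization {R : Type*} [CommRing R]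
    (p : ℕ) (hp : p.Prime) [CharP R p] (a : Ideal R) (S : Submonoid R)
    (ha : ∀ (r : R) (n : ℕ), r ^ p ^ n ∈ FrobPow p n a → r ∈ a) :
    ∀ (y : Localization S) (n : ℕ),
      y ^ p ^ n ∈ FrobPow p n (Ideal.map (algebraMap R (Localization S)) a) →
        y ∈ Ideal.map (algebraMap R (Localization S)) a := by
  intro y n hy
  rcases subsingleton_or_nontrivial (Localization S) with h | h
  · rw [Subsingleton.elim y 0]
    exact zero_mem _
  have hchar : CharP (Localization S) p := by
    rw [CharP.charP_iff_prime_eq_zero hp]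
    rw [← map_natCast (algebraMap R (Localization S)) p, CharP.cast_eq_zero R p, map_zero]
  haveI := hchar
  have hy' := FrobPow_map_le p n hp (algebraMap R (Localization S)) a hy
  rw [IsLocalization.mem_map_algebraMap_iff S] at hy'
  obtain ⟨⟨⟨x, hx⟩, s⟩, hxs⟩ := hy'
  obtain ⟨⟨r, t⟩, hrt⟩ := IsLocalization.surj S y
  -- y * f t = f r ; y^q * f s = f x
  have key : algebraMap R (Localization S) (r ^ p ^ n * s) =
      algebraMap R (Localization S) (x * (t : R) ^ p ^ n) := by
    rw [map_mul, map_mul, map_pow, ← hrt, ← hxs, map_pow, mul_pow]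
    ring
  obtain ⟨c, hc⟩ := (IsLocalization.eq_iff_exists S _).mp key
  -- c * (r^q * s) = c * (x * t^q)
  have hmem : (c : R) * (r ^ p ^ n * s) ∈ FrobPow p n a := by
    rw [hc]
    exact Ideal.mul_mem_left _ _ (Ideal.mul_mem_right _ _ hx)
  have hmem2 : ((c : R) * s * r) ^ p ^ n ∈ FrobPow p n a := by
    have hq : 0 < p ^ n := pow_pos hp.pos n
    have : ((c : R) * s * r) ^ p ^ n =
        ((c : R) * s) ^ (p ^ n - 1) * ((c : R) * (r ^ p ^ n * s)) := by
      rw [mul_pow]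
      rw [show ((c : R) * s) ^ p ^ n = ((c : R) * s) ^ (p ^ n - 1) * ((c : R) * s) by
        rw [← pow_succ, Nat.sub_add_cancel hq]]
      ring
    rw [this]
    exact Ideal.mul_mem_left _ _ hmem
  have hra : (c : R) * s * r ∈ a := ha _ n hmem2
  rw [IsLocalization.mem_map_algebraMap_iff S]
  refine ⟨⟨⟨(c : R) * s * r, hra⟩, c * s * t⟩, ?_⟩
  simp only [Submonoid.coe_mul, map_mul]
  rw [← hrt]
  ring
end

section
/- Let η : R → R' be a homomorphism of commutative Noetherian rings of prime characteristic p, let m₀ ∈ ℕ, and let c ∈ R° be a p^{m₀}-weak test element for R such that η(c) is a p^{m₀}-weak test element for R'. If a' is a tightly closed ideal of R', then η^{-1}(a') is a tightly closed ideal of R. -/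
/-- `c` is a `p^{m₀}`-weak test element. -/
def IsWeakTestElement {R : Type*} [CommRing R] (p m₀ : ℕ) (c : R) : Prop :=
  c ∈ RingCirc R ∧
    ∀ (b : Ideal R) (r : R), r ∈ TightClosure p b ↔ ∀ n ≥ m₀, c * r ^ p ^ n ∈ FrobPow p n b

lemma frobPow_map_le {R R' : Type*} [CommRing R] [CommRing R'] (η : R →+* R')
    (p n : ℕ) (a' : Ideal R') {x : R} (hx : x ∈ FrobPow p n (Ideal.comap η a')) :
    η x ∈ FrobPow p n a' := by
  have : Ideal.map η (FrobPow p n (Ideal.comap η a')) ≤ FrobPow p n a' := by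
    rw [FrobPow, Ideal.map_span]
    apply Ideal.span_le.2
    rintro _ ⟨_, ⟨y, hy, rfl⟩, rfl⟩
    exact Ideal.subset_span ⟨η y, hy, by simp [map_pow]⟩
  exact this (Ideal.mem_map_of_mem η hx)

lemma mem_tightClosure_of_mem {R : Type*} [CommRing R] (p : ℕ) (b : Ideal R)
    {c r : R} (hc : c ∈ RingCirc R) (hr : r ∈ b) : r ∈ TightClosure p b := by
  refine ⟨c, hc, 0, fun n _ => ?_⟩
  exact Ideal.mul_mem_left _ c (Ideal.subset_span ⟨r, hr, rfl⟩)

theorem tightlyClosed_comap {R R' : Type*} [CommRing R] [IsNoetherianRing R]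
    [CommRing R'] [IsNoetherianRing R'] (p : ℕ) (hp : p.Prime) [CharP R p] [CharP R' p]
    (η : R →+* R') (m₀ : ℕ) (c : R)
    (hc : IsWeakTestElement p m₀ c) (hc' : IsWeakTestElement p m₀ (η c))
    (a' : Ideal R') (ha' : TightClosure p a' = (a' : Set R')) :
    TightClosure p (Ideal.comap η a') = ((Ideal.comap η a' : Ideal R) : Set R) := by
  apply Set.Subset.antisymm
  · intro r hr
    have h := (hc.2 _ r).1 hr
    have : η r ∈ TightClosure p a' := by
      refine ⟨η c, hc'.1, m₀, fun n hn => ?_⟩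
      have := frobPow_map_le η p n a' (h n hn)
      simpa [map_mul, map_pow] using this
    rw [ha'] at this
    exact this
  · exact fun r hr => mem_tightClosure_of_mem p _ hc.1 hr
end

section
/- Let R be a commutative Noetherian ring of prime characteristic p, let p be a prime ideal of R, and let (q_n)_{n∈ℕ} be an f-sequence of p-primary ideals of R. If h ∈ ℕ is such that p^h ⊆ q_0, then p^{[p^n]·h} ⊆ q_n for all n ∈ ℕ (here p^{[p^n]·h} means the h-th ordinary power of the Frobenius power p^{[p^n]}). -/
theorem FrobPow_eq_map {R : Type*} [CommRing R] (p n : ℕ) [hp : Fact p.Prime] [CharP R p]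
    (b : Ideal R) : FrobPow p n b = Ideal.map (iterateFrobenius R p n) b := by
  rfl

theorem primary_fSequence_linear_growth {R : Type*} [CommRing R] [IsNoetherianRing R]
    (p : ℕ) (hp : p.Prime) [CharP R p] (P : Ideal R) (hP : P.IsPrime)
    (q : ℕ → Ideal R)
    (hfs : ∀ (n : ℕ) (r : R), r ∈ q n ↔ r ^ p ∈ q (n + 1))
    (hprim : ∀ n : ℕ, (q n).IsPrimary ∧ (q n).radical = P)
    (h : ℕ) (hh : P ^ h ≤ q 0) :
    ∀ n : ℕ, (FrobPow p n P) ^ h ≤ q n := by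
  haveI : Fact p.Prime := ⟨hp⟩
  intro n
  induction n with
  | zero =>
    rw [FrobPow_eq_map, ← Ideal.map_pow, iterateFrobenius_zero, Ideal.map_id]
    exact hh
  | succ n ih =>
    have hcomp : iterateFrobenius R p (n + 1) = (frobenius R p).comp (iterateFrobenius R p n) := by
      rw [← iterateFrobenius_one R p, ← iterateFrobenius_add, add_comm]
    rw [FrobPow_eq_map, ← Ideal.map_pow, hcomp, ← Ideal.map_map]
    rw [FrobPow_eq_map, ← Ideal.map_pow] at ih
    calc Ideal.map (frobenius R p) (Ideal.map (iterateFrobenius R p n) (P ^ h))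
        ≤ Ideal.map (frobenius R p) (q n) := Ideal.map_mono ih
      _ ≤ q (n + 1) := by
          rw [Ideal.map_le_iff_le_comap]
          intro r hr
          simpa [frobenius_def] using (hfs n r).mp hr
end

section
/- Let A be a subring of the polynomial ring K[X] given by A = K[X^2, X^3], where K is a field of characteristic 2. Then the ideal a = (X^2)·A of A is not F-closed: X^3 ∉ a, but (X^3)^2 ∈ a^{[2]}. -/
open Polynomial

lemma coeff_one_eq_zero_of_mem_adjoin {K : Type*} [Field K]
    {p : K[X]} (hp : p ∈ Algebra.adjoin K ({X ^ 2, X ^ 3} : Set K[X])) :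
    p.coeff 1 = 0 := by
  induction hp using Algebra.adjoin_induction with
  | mem x hx => rcases hx with rfl | rfl <;> simp [coeff_X_pow]
  | algebraMap r => simp [Polynomial.coeff_C]
  | add x y hx hy ihx ihy => simp [ihx, ihy]
  | mul x y hx hy ihx ihy =>
      rw [coeff_mul]
      simp [Finset.Nat.antidiagonal_succ, ihx, ihy]

theorem adjoin_sq_cube_not_fClosed {K : Type*} [Field K] [CharP K 2]
    (x2 x3 : Algebra.adjoin K ({Polynomial.X ^ 2, Polynomial.X ^ 3} : Set (Polynomial K)))
    (hx2 : (x2 : Polynomial K) = Polynomial.X ^ 2)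
    (hx3 : (x3 : Polynomial K) = Polynomial.X ^ 3) :
    x3 ∉ Ideal.span {x2} ∧ x3 ^ 2 ∈ FrobPow 2 1 (Ideal.span {x2}) ∧
      ¬ (∀ (r : Algebra.adjoin K ({Polynomial.X ^ 2, Polynomial.X ^ 3} : Set (Polynomial K)))
          (n : ℕ), r ^ 2 ^ n ∈ FrobPow 2 n (Ideal.span {x2}) → r ∈ Ideal.span {x2}) := by
  have h1 : x3 ∉ Ideal.span {x2} := by
    intro h
    rw [Ideal.mem_span_singleton] at h
    obtain ⟨a, ha⟩ := h
    have ha0 : (x3 : K[X]) = (x2 : K[X]) * (a : K[X]) := by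
      exact_mod_cast congrArg Subtype.val ha
    rw [hx2, hx3] at ha0
    have hc := congrArg (fun p => Polynomial.coeff p 3) ha0
    rw [Polynomial.coeff_X_pow_mul (a : K[X]) 2 1, coeff_X_pow] at hc
    rw [coeff_one_eq_zero_of_mem_adjoin a.2] at hc
    simp at hc
  have key : x3 ^ 2 = x2 * x2 ^ 2 := by
    apply Subtype.ext
    push_cast
    rw [hx2, hx3]
    ring
  have h2 : x3 ^ 2 ∈ FrobPow 2 1 (Ideal.span {x2}) := by
    rw [key]
    apply Ideal.mul_mem_left
    apply Ideal.subset_span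
    exact ⟨x2, Ideal.mem_span_singleton_self x2, by norm_num⟩
  refine ⟨h1, h2, fun h => h1 (h x3 1 ?_)⟩
  simpa using h2
end

section
/- Let R be a commutative Noetherian domain of prime characteristic p whose absolute integral closure R^+ is flat over R. Let q be a p-primary ideal of R, identify the perfect closure R^∞ with {σ ∈ R^+ : σ^{p^n} ∈ R for some n}, and let P = {σ ∈ R^∞ : σ^{p^n} ∈ p for some n} be the prime of R^∞ corresponding to p. Then q·R^+ ∩ R^∞ is a P-primary ideal of R^∞. -/
open TensorProduct in
lemma my_flat_colon {R A : Type*} [CommRing R] [CommRing A] [Algebra R A]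
    (hflat : Module.Flat R A) (I J : Ideal R) (s : R)
    (hJ : ∀ r : R, r ∈ J ↔ s * r ∈ I) (x : A)
    (hx : algebraMap R A s * x ∈ I.map (algebraMap R A)) :
    x ∈ J.map (algebraMap R A) := by
  haveI := hflat
  set f := algebraMap R A with hf
  let μ : R →ₗ[R] R ⧸ I := (I.mkQ).comp (LinearMap.lsmul R R s)
  have hker : LinearMap.ker μ = (J : Submodule R R) := by
    ext r
    simp only [μ, LinearMap.mem_ker, LinearMap.comp_apply, LinearMap.lsmul_apply,
      Submodule.mkQ_apply, Submodule.Quotient.mk_eq_zero, smul_eq_mul]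
    exact (hJ r).symm
  let g : (R ⧸ (J : Submodule R R)) →ₗ[R] R ⧸ I :=
    Submodule.liftQ _ μ (le_of_eq hker.symm)
  have hg : Function.Injective g := by
    rw [← LinearMap.ker_eq_bot]
    exact Submodule.ker_liftQ_eq_bot _ _ _ (le_of_eq hker)
  have hT := Module.Flat.lTensor_preserves_injective_linearMap (M := A) g hg
  have h2 : x ⊗ₜ[R] (Ideal.Quotient.mk I s) = (0 : A ⊗[R] (R ⧸ I)) := by
    rw [← (tensorQuotEquivQuotSMul A I).map_eq_zero_iff,
      tensorQuotEquivQuotSMul_tmul_mk, Submodule.Quotient.mk_eq_zero,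
      Ideal.smul_top_eq_map]
    simpa [Algebra.smul_def] using hx
  have key : (LinearMap.lTensor A g) (x ⊗ₜ[R] Submodule.Quotient.mk 1) = 0 := by
    rw [LinearMap.lTensor_tmul]
    have : g (Submodule.Quotient.mk 1) = Ideal.Quotient.mk I s := by
      show μ 1 = _
      simp [μ]
    rw [this, h2]
  have h3 : x ⊗ₜ[R] (Submodule.Quotient.mk 1 : R ⧸ (J : Submodule R R)) = 0 := by
    apply hT
    simpa using key
  have h4 := congrArg (tensorQuotEquivQuotSMul A (J : Ideal R)) h3
  rw [map_zero] at h4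
  have h5 : (Submodule.Quotient.mk x : A ⧸ ((J : Ideal R) • (⊤ : Submodule R A))) = 0 := by
    have h6 := tensorQuotEquivQuotSMul_tmul_mk (M := A) (J : Ideal R) x 1
    rw [one_smul] at h6
    rw [← h6]; exact h4
  rw [Submodule.Quotient.mk_eq_zero, Ideal.smul_top_eq_map] at h5
  exact h5

lemma my_contraction {R A : Type*} [CommRing R] [CommRing A] [Algebra R A]
    (hflat : Module.Flat R A) [Algebra.IsIntegral R A]
    (hinj : Function.Injective (algebraMap R A)) (I : Ideal R) (r : R)
    (h : algebraMap R A r ∈ I.map (algebraMap R A)) : r ∈ I := by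
  by_contra hr
  set J : Ideal R := I.colon (Ideal.span {r}) with hJdef
  have hJ : ∀ u : R, u ∈ J ↔ r * u ∈ I := by
    intro u
    rw [hJdef, Ideal.mem_colon_span_singleton, mul_comm]
  have h1 : (1 : A) ∈ J.map (algebraMap R A) := by
    apply my_flat_colon hflat I J r hJ
    simpa using h
  have hJne : J ≠ ⊤ := by
    intro htop
    exact hr (by simpa [mul_one] using (hJ 1).mp (htop ▸ Submodule.mem_top))
  obtain ⟨m, hm, hJm⟩ := Ideal.exists_le_maximal J hJne
  obtain ⟨M, hM, hMc⟩ := Ideal.exists_ideal_over_maximal_of_isIntegral (S := A) m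
    (by rw [(RingHom.injective_iff_ker_eq_bot _).mp hinj]; exact bot_le)
  have hmap : J.map (algebraMap R A) ≤ M := by
    rw [Ideal.map_le_iff_le_comap, hMc]
    exact hJm
  exact hM.ne_top (Ideal.eq_top_of_unit_mem M 1 1 (by simpa using hmap h1) (mul_one 1))

set_option maxHeartbeats 1000000 in
set_option synthInstance.maxHeartbeats 1000000 in
theorem plus_closure_primary_in_perfect_closure {R : Type*} [CommRing R] [IsDomain R]
    [IsNoetherianRing R] (p : ℕ) (hp : p.Prime) [CharP R p]
    (Rplus : Subalgebra R (AlgebraicClosure (FractionRing R)))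
    (hRplus : Rplus = integralClosure R (AlgebraicClosure (FractionRing R)))
    (hflat : Module.Flat R Rplus)
    (q P' : Ideal R) (hP' : P'.IsPrime) (hq : q.IsPrimary) (hqrad : q.radical = P')
    (Rinf Q P : Set Rplus)
    (hRinf : Rinf = {σ | ∃ n : ℕ, σ ^ p ^ n ∈ Set.range (algebraMap R Rplus)})
    (hQ : Q = ↑(Ideal.map (algebraMap R Rplus) q) ∩ Rinf)
    (hPdef : P = {σ | σ ∈ Rinf ∧ ∃ n : ℕ, σ ^ p ^ n ∈ (algebraMap R Rplus) '' P'}) :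
    Q ≠ Rinf ∧
      (∀ a b, a ∈ Q → b ∈ Q → a + b ∈ Q) ∧
      (∀ a ∈ Rinf, ∀ b ∈ Q, a * b ∈ Q) ∧
      (∀ a b, a ∈ Rinf → b ∈ Rinf → a * b ∈ Q → a ∈ Q ∨ b ∈ P) ∧
      {σ | σ ∈ Rinf ∧ ∃ k : ℕ, 0 < k ∧ σ ^ k ∈ Q} = P := by
  subst hRplus hRinf hQ hPdef hqrad
  haveI := Fact.mk hp
  have hKinj : Function.Injective
      (algebraMap R (AlgebraicClosure (FractionRing R))) := by
    rw [IsScalarTower.algebraMap_eq R (FractionRing R) (AlgebraicClosure (FractionRing R))]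
    exact (algebraMap (FractionRing R) (AlgebraicClosure (FractionRing R))).injective.comp
      (IsFractionRing.injective R (FractionRing R))
  have hfinj : Function.Injective
      (algebraMap R (integralClosure R (AlgebraicClosure (FractionRing R)))) := by
    intro a b hab
    apply hKinj
    exact congrArg Subtype.val hab
  haveI : CharP (integralClosure R (AlgebraicClosure (FractionRing R))) p :=
    charP_of_injective_algebraMap hfinj p
  set f := algebraMap R (integralClosure R (AlgebraicClosure (FractionRing R))) with hf
  have hiter : ∀ (σ : integralClosure R (AlgebraicClosure (FractionRing R))) (n m : ℕ) (r : R),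
      f r = σ ^ p ^ n → f (r ^ p ^ m) = σ ^ p ^ (n + m) := by
    intro σ n m r hr
    rw [map_pow, hr, ← pow_mul, ← pow_add]
  have hRinfpow : ∀ (σ : integralClosure R (AlgebraicClosure (FractionRing R))),
      (∃ n, σ ^ p ^ n ∈ Set.range f) → ∀ k : ℕ,
      ∃ n, (σ ^ k) ^ p ^ n ∈ Set.range f := by
    rintro σ ⟨n, r, hr⟩ k
    refine ⟨n, r ^ k, ?_⟩
    rw [map_pow, hr, ← pow_mul, ← pow_mul, mul_comm]
  have hqne : q ≠ ⊤ := hq.ne_top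
  refine ⟨?_, ?_, ?_, ?_, ?_⟩
  -- 1. Q ≠ Rinf
  · intro heq
    have h1 : (1 : integralClosure R (AlgebraicClosure (FractionRing R))) ∈
        ({σ | ∃ n : ℕ, σ ^ p ^ n ∈ Set.range f} :
          Set (integralClosure R (AlgebraicClosure (FractionRing R)))) :=
      ⟨0, 1, by simp⟩
    rw [← heq] at h1
    have := my_contraction hflat hfinj q 1 (by simpa using h1.1)
    exact hqne (Ideal.eq_top_of_unit_mem q 1 1 this (mul_one 1))
  -- 2. addition
  · rintro a b ⟨haI, na, ra, hra⟩ ⟨hbI, nb, rb, hrb⟩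
    refine ⟨Ideal.add_mem _ haI hbI, na + nb, ?_⟩
    have h1 := hiter a na nb ra hra
    have h2 := hiter b nb na rb hrb
    rw [Nat.add_comm nb na] at h2
    exact ⟨ra ^ p ^ nb + rb ^ p ^ na, by rw [map_add, h1, h2, add_pow_char_pow]⟩
  -- 3. multiplication
  · rintro a ⟨na, ra, hra⟩ b ⟨hbI, nb, rb, hrb⟩
    refine ⟨Ideal.mul_mem_left _ a hbI, na + nb, ?_⟩
    have h1 := hiter a na nb ra hra
    have h2 := hiter b nb na rb hrb
    rw [Nat.add_comm nb na] at h2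
    exact ⟨ra ^ p ^ nb * rb ^ p ^ na, by rw [map_mul, h1, h2, mul_pow]⟩
  -- 4. primary property
  · rintro a b haR hbR ⟨habI, -⟩
    by_cases hbP : b ∈ {σ | σ ∈ {σ | ∃ n : ℕ, σ ^ p ^ n ∈ Set.range f} ∧
        ∃ n : ℕ, σ ^ p ^ n ∈ f '' ↑q.radical}
    · exact Or.inr hbP
    left
    have hbR' := hbR
    obtain ⟨n₀, s₀, hs₀⟩ := hbR
    have hs₀P : s₀ ∉ q.radical := by
      intro hsr
      exact hbP ⟨hbR', n₀, s₀, hsr, hs₀⟩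
    have h1 : f s₀ * a ∈ q.map f := by
      have h2 : (a * b) * b ^ (p ^ n₀ - 1) ∈ q.map f :=
        Ideal.mul_mem_right _ _ habI
      have hbpow : b ^ p ^ n₀ = b ^ (p ^ n₀ - 1) * b := by
        rw [← pow_succ, Nat.sub_add_cancel (Nat.one_le_iff_ne_zero.mpr
          (Nat.pos_iff_ne_zero.mp (pow_pos hp.pos n₀)))]
      have heq : f s₀ * a = (a * b) * b ^ (p ^ n₀ - 1) := by
        rw [hs₀, hbpow]
        ring
      rw [heq]
      exact h2
    have hJmem : ∀ u : R, u ∈ q.colon (Ideal.span {s₀}) ↔ s₀ * u ∈ q := by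
      intro u
      rw [Ideal.mem_colon_span_singleton, mul_comm]
    have h2 : a ∈ (q.colon (Ideal.span {s₀})).map f :=
      my_flat_colon hflat q _ s₀ hJmem a h1
    have hJq : q.colon (Ideal.span {s₀}) ≤ q := by
      intro u hu
      have hmul : u * s₀ ∈ q := by rw [mul_comm]; exact (hJmem u).mp hu
      rcases (Ideal.isPrimary_iff.mp hq).2 hmul with h | h
      · exact h
      · exact absurd h hs₀P
    exact ⟨Ideal.map_mono hJq h2, haR⟩
  -- 5. radical equals P
  · ext σ
    simp only [Set.mem_setOf_eq]
    constructor
    · rintro ⟨hσR, k, hk, hkI, -⟩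
      refine ⟨hσR, ?_⟩
      obtain ⟨n, t, ht⟩ := hσR
      refine ⟨n, t, ?_, ht⟩
      have h0 : (σ ^ k) ^ p ^ n ∈ q.map f :=
        Ideal.pow_mem_of_mem _ hkI _ (pow_pos hp.pos n)
      have hmem : f (t ^ k) ∈ q.map f := by
        rw [map_pow, ht, ← pow_mul, mul_comm, pow_mul]
        exact h0
      have htk : t ^ k ∈ q := my_contraction hflat hfinj q (t ^ k) hmem
      exact ⟨k, htk⟩
    · rintro ⟨hσR, n, t, htP, ht⟩
      refine ⟨hσR, ?_⟩
      obtain ⟨m, hm⟩ := htP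
      have hm0 : 0 < m := by
        rcases Nat.eq_zero_or_pos m with h | h
        · subst h
          exact absurd (Ideal.eq_top_of_unit_mem q 1 1 (by simpa using hm) (mul_one 1)) hqne
        · exact h
      refine ⟨p ^ n * m, Nat.mul_pos (pow_pos hp.pos n) hm0, ?_, ?_⟩
      · show σ ^ (p ^ n * m) ∈ Ideal.map f q
        have heq2 : σ ^ (p ^ n * m) = f (t ^ m) := by
          rw [map_pow, ht, pow_mul]
        rw [heq2]
        exact Ideal.mem_map_of_mem f hm
      · exact hRinfpow σ hσR (p ^ n * m)
end
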